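/- Let χ be the non-principal Dirichlet character modulo 4 and L(s, χ) = ∑_{n≥1} χ(n) n^{-s}, and for Re(s) > 1 let F(s) = ∏_{q prime, q ≡ 3 (mod 4)} (1 − q^{-s})^{-1}. Then for every complex s with Re(s) > 1, (1 − 2^{-s})·ζ(s)/L(s, χ) = F(s)²/F(2s), where ζ is the Riemann zeta function. -/

import Mathlib

/-- The non-principal Dirichlet character modulo 4, as a function on `ℕ`. -/
def chiFour (n : ℕ) : ℂ :=
  if n % 4 = 1 then 1 else if n % 4 = 3 then -1 else 0

open Complex

/-- The mod-4 character as a Mathlib `DirichletCharacter`. -/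
noncomputable def chi4 : DirichletCharacter ℂ 4 := ZMod.χ₄.ringHomComp (Int.castRingHom ℂ)

lemma chi4_nat (n : ℕ) : chi4 (n : ZMod 4) = chiFour n := by
  have h := ZMod.χ₄_nat_eq_if_mod_four n
  have h2 : n % 2 = n % 4 % 2 := (Nat.mod_mod_of_dvd n (by norm_num)).symm
  simp only [chi4, MulChar.ringHomComp_apply, h, chiFour]
  have h4 : n % 4 = 0 ∨ n % 4 = 1 ∨ n % 4 = 2 ∨ n % 4 = 3 := by omega
  rcases h4 with h' | h' | h' | h' <;>
    · have h2' : n % 2 = n % 4 % 2 := h2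
      rw [h'] at h2' ⊢
      norm_num at h2' ⊢ <;> simp [h2']

lemma norm_cpow_lt_one {n : ℕ} (hn : 2 ≤ n) {s : ℂ} (hs : 1 < s.re) :
    ‖(n : ℂ) ^ (-s)‖ < 1 := by
  rw [norm_natCast_cpow_of_pos (by omega) (-s), neg_re]
  have h1 : (1 : ℝ) < n := by exact_mod_cast by omega
  exact Real.rpow_lt_one_of_one_lt_of_neg h1 (by linarith)

lemma one_sub_ne_zero' {z : ℂ} (hz : ‖z‖ < 1) : 1 - z ≠ 0 := by
  intro h
  rw [sub_eq_zero] at h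
  rw [← h] at hz
  simp at hz

lemma one_add_ne_zero' {z : ℂ} (hz : ‖z‖ < 1) : 1 + z ≠ 0 := by
  intro h
  have hz1 : z = -1 := by linear_combination h
  rw [hz1] at hz
  simp at hz

lemma re_pos_one_sub {z : ℂ} (hz : ‖z‖ < 1) : 0 < (1 - z).re := by
  have h : |z.re| < 1 := lt_of_le_of_lt (abs_re_le_norm z) hz
  have := abs_lt.mp h
  simp only [sub_re, one_re]
  linarith [this.2]

lemma re_pos_one_add {z : ℂ} (hz : ‖z‖ < 1) : 0 < (1 + z).re := by
  have h : |z.re| < 1 := lt_of_le_of_lt (abs_re_le_norm z) hz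
  have := abs_lt.mp h
  simp only [add_re, one_re]
  linarith [this.1]

lemma log_one_sub_mul_self {z : ℂ} (hz : ‖z‖ < 1) :
    log (1 - z * z) = log (1 - z) + log (1 + z) := by
  have h1 : (1 : ℂ) - z * z = (1 - z) * (1 + z) := by ring
  rw [h1]
  refine Complex.log_mul (one_sub_ne_zero' hz) (one_add_ne_zero' hz) ?_
  have ha : |arg (1 - z)| < Real.pi / 2 :=
    abs_arg_lt_pi_div_two_iff.mpr (Or.inl (re_pos_one_sub hz))
  have hb : |arg (1 + z)| < Real.pi / 2 :=
    abs_arg_lt_pi_div_two_iff.mpr (Or.inl (re_pos_one_add hz))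
  have ha' := abs_lt.mp ha
  have hb' := abs_lt.mp hb
  refine Set.mem_Ioc.mpr ⟨by linarith [ha'.1, hb'.1], by linarith [ha'.2, hb'.2]⟩

/-- For `Re(s) > 1`, `(1 - 2^{-s})·ζ(s)/L(s,χ) = F(s)²/F(2s)`, where `F` is the
Euler product over the primes `q ≡ 3 (mod 4)`. -/
theorem zeta_over_L_eq_F_squared_div_F_two_s (s : ℂ) (hs : 1 < s.re) :
    (1 - 2 ^ (-s)) * riemannZeta s / (∑' n : ℕ, chiFour n / (n : ℂ) ^ s) =
      (∏' q : {q : ℕ // q.Prime ∧ q % 4 = 3}, (1 - ((q : ℕ) : ℂ) ^ (-s))⁻¹) ^ 2 /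
        ∏' q : {q : ℕ // q.Prime ∧ q % 4 = 3}, (1 - ((q : ℕ) : ℂ) ^ (-(2 * s)))⁻¹ := by
  classical
  have hs0 : s ≠ 0 := ne_zero_of_one_lt_re hs
  have hs2 : 1 < (2 * s).re := by
    have : (2 * s).re = 2 * s.re := by simp [Complex.mul_re]
    rw [this]; linarith
  -- summability of the basic summands over ℕ
  have hsum1 : Summable (fun n : ℕ ↦ ‖(n : ℂ) ^ (-s)‖) := by
    have := summable_riemannZetaSummand hs
    simpa only [riemannZetaSummandHom, MonoidWithZeroHom.coe_mk, ZeroHom.coe_mk] using this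
  have hsum2 : Summable (fun n : ℕ ↦ ‖(n : ℂ) ^ (-(2 * s))‖) := by
    have := summable_riemannZetaSummand hs2
    simpa only [riemannZetaSummandHom, MonoidWithZeroHom.coe_mk, ZeroHom.coe_mk] using this
  have hsumχ : Summable (fun n : ℕ ↦ ‖chi4 n * (n : ℂ) ^ (-s)‖) := by
    have := summable_dirichletSummand chi4 hs
    simpa only [dirichletSummandHom, MonoidWithZeroHom.coe_mk, ZeroHom.coe_mk] using this
  -- summability of logs over ℕ
  have hlog1 : Summable (fun n : ℕ ↦ log (1 - (n : ℂ) ^ (-s))) := hsum1.of_norm.clog_one_sub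
  have hlog1' : Summable (fun n : ℕ ↦ log (1 + (n : ℂ) ^ (-s))) := by
    simpa [sub_neg_eq_add] using hsum1.of_norm.neg.clog_one_sub
  have hlog2 : Summable (fun n : ℕ ↦ log (1 - (n : ℂ) ^ (-(2 * s)))) := hsum2.of_norm.clog_one_sub
  have hlogχ : Summable (fun n : ℕ ↦ log (1 - chi4 n * (n : ℂ) ^ (-s))) :=
    hsumχ.of_norm.clog_one_sub
  -- subtype versions
  have HP1 : Summable (fun p : Nat.Primes ↦ log (1 - (p : ℂ) ^ (-s))) :=
    hlog1.subtype {p | p.Prime}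
  have HPχ : Summable (fun p : Nat.Primes ↦ log (1 - chi4 (p : ℕ) * (p : ℂ) ^ (-s))) :=
    hlogχ.subtype {p | p.Prime}
  have HQ1 : Summable (fun q : {q : ℕ // q.Prime ∧ q % 4 = 3} ↦ log (1 - ((q : ℕ) : ℂ) ^ (-s))) :=
    hlog1.subtype {q | q.Prime ∧ q % 4 = 3}
  have HQ1' : Summable
      (fun q : {q : ℕ // q.Prime ∧ q % 4 = 3} ↦ log (1 + ((q : ℕ) : ℂ) ^ (-s))) :=
    hlog1'.subtype {q | q.Prime ∧ q % 4 = 3}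
  have HQ2 : Summable
      (fun q : {q : ℕ // q.Prime ∧ q % 4 = 3} ↦ log (1 - ((q : ℕ) : ℂ) ^ (-(2 * s)))) :=
    hlog2.subtype {q | q.Prime ∧ q % 4 = 3}
  -- norm bounds
  have hnq : ∀ q : {q : ℕ // q.Prime ∧ q % 4 = 3}, ‖((q : ℕ) : ℂ) ^ (-s)‖ < 1 :=
    fun q ↦ norm_cpow_lt_one q.2.1.two_le hs
  have hnq2 : ∀ q : {q : ℕ // q.Prime ∧ q % 4 = 3}, ‖((q : ℕ) : ℂ) ^ (-(2 * s))‖ < 1 :=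
    fun q ↦ norm_cpow_lt_one q.2.1.two_le hs2
  -- the two F products as exponentials
  have hFs : (∏' q : {q : ℕ // q.Prime ∧ q % 4 = 3}, (1 - ((q : ℕ) : ℂ) ^ (-s))⁻¹) =
      exp (∑' q : {q : ℕ // q.Prime ∧ q % 4 = 3}, -log (1 - ((q : ℕ) : ℂ) ^ (-s))) := by
    have h := (HQ1.neg.hasSum).cexp.tprod_eq
    rw [← h]
    refine tprod_congr fun q ↦ ?_
    simp [Function.comp, exp_neg, exp_log (one_sub_ne_zero' (hnq q))]
  have hF2s : (∏' q : {q : ℕ // q.Prime ∧ q % 4 = 3}, (1 - ((q : ℕ) : ℂ) ^ (-(2 * s)))⁻¹) =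
      exp (∑' q : {q : ℕ // q.Prime ∧ q % 4 = 3}, -log (1 - ((q : ℕ) : ℂ) ^ (-(2 * s)))) := by
    have h := (HQ2.neg.hasSum).cexp.tprod_eq
    rw [← h]
    refine tprod_congr fun q ↦ ?_
    simp [Function.comp, exp_neg, exp_log (one_sub_ne_zero' (hnq2 q))]
  -- zeta and L as exponentials
  have hzeta : riemannZeta s = exp (∑' p : Nat.Primes, -log (1 - (p : ℂ) ^ (-s))) :=
    (riemannZeta_eulerProduct_exp_log hs).symm
  have hL : (∑' n : ℕ, chiFour n / (n : ℂ) ^ s) =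
      exp (∑' p : Nat.Primes, -log (1 - chi4 (p : ℕ) * (p : ℂ) ^ (-s))) := by
    rw [DirichletCharacter.LSeries_eulerProduct_exp_log chi4 hs]
    show _ = LSeries _ s
    rw [LSeries]
    refine tsum_congr fun n ↦ ?_
    rcases eq_or_ne n 0 with rfl | hn
    · simp [LSeries.term_zero, chiFour]
    · rw [LSeries.term_of_ne_zero hn, chi4_nat]
  have h2lt : ‖((2 : ℕ) : ℂ) ^ (-s)‖ < 1 := norm_cpow_lt_one le_rfl hs
  have h2lt' : ‖(2 : ℂ) ^ (-s)‖ < 1 := by exact_mod_cast h2lt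
  have h2ne : (1 : ℂ) - 2 ^ (-s) ≠ 0 := one_sub_ne_zero' h2lt'
  -- reduce to an identity of exponents
  rw [hzeta, hL, hFs, hF2s,
    show (1 : ℂ) - 2 ^ (-s) = exp (log (1 - 2 ^ (-s))) from (exp_log h2ne).symm,
    ← exp_add, ← exp_sub, pow_two, ← exp_add, ← exp_sub]
  congr 1
  -- notation
  set Q := {q : ℕ // q.Prime ∧ q % 4 = 3} with hQdef
  set two : Nat.Primes := ⟨2, Nat.prime_two⟩ with htwo
  set g : Nat.Primes → ℂ :=
    fun p ↦ log (1 - chi4 (p : ℕ) * (p : ℂ) ^ (-s)) - log (1 - (p : ℂ) ^ (-s)) with hg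
  have hdiff : (∑' p : Nat.Primes, -log (1 - (p : ℂ) ^ (-s))) -
      (∑' p : Nat.Primes, -log (1 - chi4 (p : ℕ) * (p : ℂ) ^ (-s))) = ∑' p : Nat.Primes, g p := by
    rw [← Summable.tsum_sub HP1.neg HPχ.neg]
    exact tsum_congr fun p ↦ by rw [hg]; ring
  have hgsum : Summable g := HPχ.sub HP1
  have hgtwo : g two = -log (1 - 2 ^ (-s)) := by
    have hc : chi4 ((two : ℕ) : ZMod 4) = 0 := by
      have := chi4_nat 2
      rw [htwo]
      simpa [chiFour] using this
    rw [hg]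
    show log (1 - chi4 ((two : ℕ) : ZMod 4) * _) - log (1 - ((two : ℕ) : ℂ) ^ (-s)) = _
    rw [hc]
    norm_num
  have hsplit := Summable.tsum_eq_add_tsum_ite hgsum two
  -- the injection from Q into the primes
  set e : Q → Nat.Primes := fun q ↦ ⟨q.1, q.2.1⟩ with he
  have he_inj : Function.Injective e := by
    intro a b hab
    exact Subtype.ext (congrArg (Subtype.val : Nat.Primes → ℕ) hab)
  set g' : Nat.Primes → ℂ := fun p ↦ if p = two then 0 else g p with hg'
  have hsupp : Function.support g' ⊆ Set.range e := by
    intro p hp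
    rcases eq_or_ne p two with rfl | hptwo
    · simp [hg'] at hp
    · have hge : g p ≠ 0 := by
        intro h0
        apply hp
        simp [hg', hptwo, h0]
      have hodd : (p : ℕ) % 2 = 1 := by
        have hne2 : (p : ℕ) ≠ 2 := fun h ↦ hptwo (Subtype.ext h)
        have : Fact (p : ℕ).Prime := ⟨p.2⟩
        exact (Nat.Prime.mod_two_eq_one_iff_ne_two p.2).mpr hne2
      have h14 : (p : ℕ) % 4 = 1 ∨ (p : ℕ) % 4 = 3 := by omega
      rcases h14 with h1 | h3
      · exfalso
        apply hge
        have hc : chi4 ((p : ℕ) : ZMod 4) = 1 := by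
          rw [chi4_nat]; simp [chiFour, h1]
        rw [hg]
        show log (1 - chi4 ((p : ℕ) : ZMod 4) * _) - _ = 0
        rw [hc, one_mul, sub_self]
      · exact ⟨⟨p.1, p.2, h3⟩, rfl⟩
  have hstep3 : (∑' q : Q, (log (1 + ((q : ℕ) : ℂ) ^ (-s)) - log (1 - ((q : ℕ) : ℂ) ^ (-s)))) =
      ∑' p : Nat.Primes, g' p := by
    rw [← he_inj.tsum_eq hsupp]
    refine tsum_congr fun q ↦ ?_
    have hqtwo : e q ≠ two := by
      intro h
      have : (q : ℕ) = 2 := congrArg Subtype.val h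
      have := q.2.2
      omega
    have hc : chi4 (((e q : ℕ)) : ZMod 4) = -1 := by
      show chi4 ((q : ℕ) : ZMod 4) = -1
      rw [chi4_nat]; simp [chiFour, q.2.2]
    simp only [hg', hqtwo, if_neg, hg]
    show log (1 + ((q : ℕ) : ℂ) ^ (-s)) - log (1 - ((q : ℕ) : ℂ) ^ (-s)) =
      log (1 - chi4 (((e q : ℕ)) : ZMod 4) * ((q : ℕ) : ℂ) ^ (-s)) -
        log (1 - ((q : ℕ) : ℂ) ^ (-s))
    rw [hc]
    ring_nf
  -- per-term identity on the Q side
  have hterm : ∀ q : Q, -log (1 - ((q : ℕ) : ℂ) ^ (-s)) + -log (1 - ((q : ℕ) : ℂ) ^ (-s)) -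
      -log (1 - ((q : ℕ) : ℂ) ^ (-(2 * s))) =
      log (1 + ((q : ℕ) : ℂ) ^ (-s)) - log (1 - ((q : ℕ) : ℂ) ^ (-s)) := by
    intro q
    have hq0 : ((q : ℕ) : ℂ) ≠ 0 := by
      exact_mod_cast q.2.1.ne_zero
    have hpow : ((q : ℕ) : ℂ) ^ (-(2 * s)) = ((q : ℕ) : ℂ) ^ (-s) * ((q : ℕ) : ℂ) ^ (-s) := by
      rw [show -(2 * s) = -s + -s by ring, cpow_add _ _ hq0]
    rw [hpow, log_one_sub_mul_self (hnq q)]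
    ring
  -- assemble
  calc log (1 - 2 ^ (-s)) + (∑' p : Nat.Primes, -log (1 - (p : ℂ) ^ (-s))) -
        (∑' p : Nat.Primes, -log (1 - chi4 (p : ℕ) * (p : ℂ) ^ (-s)))
      = log (1 - 2 ^ (-s)) + ∑' p : Nat.Primes, g p := by rw [add_sub_assoc, hdiff]
    _ = log (1 - 2 ^ (-s)) + (g two + ∑' p : Nat.Primes, g' p) := by rw [hsplit]
    _ = ∑' p : Nat.Primes, g' p := by rw [hgtwo]; ring
    _ = ∑' q : Q, (log (1 + ((q : ℕ) : ℂ) ^ (-s)) - log (1 - ((q : ℕ) : ℂ) ^ (-s))) :=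
        hstep3.symm
    _ = ∑' q : Q, (-log (1 - ((q : ℕ) : ℂ) ^ (-s)) + -log (1 - ((q : ℕ) : ℂ) ^ (-s)) -
          -log (1 - ((q : ℕ) : ℂ) ^ (-(2 * s)))) := by
        exact tsum_congr fun q ↦ (hterm q).symm
    _ = (∑' q : Q, -log (1 - ((q : ℕ) : ℂ) ^ (-s))) +
          (∑' q : Q, -log (1 - ((q : ℕ) : ℂ) ^ (-s))) -
          ∑' q : Q, -log (1 - ((q : ℕ) : ℂ) ^ (-(2 * s))) := by
        rw [Summable.tsum_sub (HQ1.neg.add HQ1.neg) HQ2.neg, Summable.tsum_add HQ1.neg HQ1.neg]
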